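/- Let f : ℝ^n → ℝ^m be continuous, m ≥ 2n+1, let L ≥ 1, ε > 0, and let C ⊂ ℝ^n be compact. Then there exist a depth L, widths n_1 = n, n_2, …, n_{L+1}, weight matrices W_ℓ ∈ ℝ^{n_{ℓ+1}×n_ℓ} and biases b_ℓ ∈ ℝ^{n_{ℓ+1}} for ℓ = 1,…,L, and W_{L+1} ∈ ℝ^{m×n_{L+1}}, such that the ReLU network N(z) = W_{L+1}·ReLU(W_L(⋯ReLU(W_2·ReLU(W_1 z + b_1) + b_2)⋯) + b_L) is injective on all of ℝ^n and satisfies ‖f(x) − N(x)‖ ≤ ε for all x ∈ C. -/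

import Mathlib

/-- The hidden part of a fully connected ReLU network: `forward d W b L x` applies `L`
layers `y ↦ ReLU(W_ℓ y + b_ℓ)` to the input `x ∈ ℝ^{d 0}`. -/
noncomputable def forward (d : ℕ → ℕ)
    (W : ∀ ℓ : ℕ, Matrix (Fin (d (ℓ + 1))) (Fin (d ℓ)) ℝ)
    (b : ∀ ℓ : ℕ, Fin (d (ℓ + 1)) → ℝ) :
    (L : ℕ) → (Fin (d 0) → ℝ) → (Fin (d L) → ℝ)
  | 0, x => x
  | (L + 1), x => fun j => max ((W L).mulVec (forward d W b L x) j + b L j) 0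

/-- Euclidean norm of a vector. -/
noncomputable def enorm {ι : Type*} [Fintype ι] (v : ι → ℝ) : ℝ :=
  Real.sqrt (∑ i, v i ^ 2)

open Set Module
open scoped ENNReal

noncomputable section
namespace IRN

def relu (t : ℝ) : ℝ := max t 0

lemma relu_nonneg (t : ℝ) : 0 ≤ relu t := le_max_right _ _
lemma relu_of_nonneg {t : ℝ} (h : 0 ≤ t) : relu t = t := max_eq_left h
lemma relu_of_nonpos {t : ℝ} (h : t ≤ 0) : relu t = 0 := max_eq_right h

lemma relu_sub_relu_neg (t : ℝ) : relu t - relu (-t) = t := by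
  rcases le_total 0 t with h | h
  · rw [relu_of_nonneg h, relu_of_nonpos (neg_nonpos.mpr h)]; ring
  · rw [relu_of_nonpos h, relu_of_nonneg (neg_nonneg.mpr h)]; ring

lemma abs_relu_le (t : ℝ) : |relu t| ≤ |t| := by
  rcases le_total 0 t with h | h
  · rw [relu_of_nonneg h]
  · rw [relu_of_nonpos h]; simp [abs_nonneg]

lemma exists_cell {A t h : ℝ} {K : ℕ} (hh : 0 < h) (hK : 1 ≤ K)
    (h1 : A ≤ t) (h2 : t ≤ A + K * h) :
    ∃ k : ℕ, k < K ∧ A + k * h ≤ t ∧ t ≤ A + (k + 1) * h := by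
  set k0 : ℕ := min ⌊(t - A) / h⌋₊ (K - 1) with hk0
  refine ⟨k0, lt_of_le_of_lt (min_le_right _ _) (Nat.sub_lt hK one_pos), ?_, ?_⟩
  · have h3 : (k0 : ℝ) ≤ (t - A) / h := by
      calc (k0 : ℝ) ≤ (⌊(t - A) / h⌋₊ : ℝ) := Nat.cast_le.mpr (min_le_left _ _)
        _ ≤ (t - A) / h := Nat.floor_le (div_nonneg (by linarith) hh.le)
    nlinarith [(le_div_iff₀ hh).mp h3]
  · rcases le_total ⌊(t - A) / h⌋₊ (K - 1) with hmin | hmin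
    · have hk : k0 = ⌊(t - A) / h⌋₊ := min_eq_left hmin
      have h4 : (t - A) / h < (k0 : ℝ) + 1 := by rw [hk]; exact Nat.lt_floor_add_one _
      nlinarith [(div_lt_iff₀ hh).mp h4]
    · have hk : k0 = K - 1 := min_eq_right hmin
      have hKr : ((K - 1 : ℕ) : ℝ) = (K : ℝ) - 1 := by
        push_cast [Nat.cast_sub hK]; ring
      rw [hk, hKr]
      nlinarith


/-- slopes of the interpolant -/
def slope (g : ℝ → ℝ) (A h : ℝ) : ℕ → ℝ
  | 0 => 0
  | (j + 1) => (g (A + (j + 1) * h) - g (A + j * h)) / h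

/-- Abel-summation identity for the ReLU interpolant. -/
lemma abel_identity (g : ℝ → ℝ) (A h t : ℝ) (hh : h ≠ 0) : ∀ k : ℕ,
    ∑ j ∈ Finset.range (k + 1), (slope g A h (j + 1) - slope g A h j) * (t - (A + j * h))
      = slope g A h (k + 1) * (t - (A + k * h)) + (g (A + k * h) - g A) := by
  intro k
  induction k with
  | zero => simp [slope]
  | succ k ih =>
      rw [Finset.sum_range_succ, ih]
      have hs : slope g A h (k + 1) * h = g (A + (k+1) * h) - g (A + k * h) := by
        simp only [slope]
        field_simp
      push_cast at hs ⊢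
      nlinarith [hs]

/-- 1-D approximation of a continuous function by a constant plus a sum of ReLUs. -/
lemma pwl_approx (g : ℝ → ℝ) (hg : Continuous g) {A B : ℝ} (hAB : A < B) {ε : ℝ} (hε : 0 < ε) :
    ∃ (K : ℕ) (c t0 : Fin K → ℝ) (α : ℝ),
      ∀ t ∈ Icc A B, |g t - (α + ∑ k, c k * relu (t - t0 k))| ≤ ε := by
  -- uniform continuity
  have huc : UniformContinuousOn g (Icc A B) :=
    isCompact_Icc.uniformContinuousOn_of_continuous hg.continuousOn
  rw [Metric.uniformContinuousOn_iff] at huc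
  obtain ⟨δ, hδ, hucd⟩ := huc (ε / 2) (by positivity)
  obtain ⟨K0, hK0⟩ := exists_nat_gt ((B - A) / δ)
  set K : ℕ := K0 + 1 with hKdef
  have hK1 : 1 ≤ K := Nat.le_add_left 1 K0
  have hKne : (K : ℝ) ≠ 0 := by positivity
  set h : ℝ := (B - A) / K with hhdef
  have hh : 0 < h := div_pos (by linarith) (by positivity)
  have hKh : (K : ℝ) * h = B - A := by
    rw [hhdef]; field_simp
  have hhδ : h < δ := by
    have hKgt : (B - A) / δ < (K : ℝ) := by
      rw [hKdef]; push_cast; linarith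
    rw [hhdef, div_lt_iff₀ (by positivity)]
    calc B - A = ((B - A) / δ) * δ := by field_simp
      _ < (K : ℝ) * δ := by
          apply mul_lt_mul_of_pos_right hKgt hδ
      _ = δ * K := by ring
  -- the network
  refine ⟨K, fun k => slope g A h (k + 1) - slope g A h k, fun k => A + k * h, g A, ?_⟩
  rintro t ⟨ht1, ht2⟩
  obtain ⟨k, hkK, hk1, hk2⟩ := exists_cell hh hK1 ht1 (by rw [hKh]; linarith)
  -- evaluate the sum
  have hmem : ∀ j : ℕ, j < K → A + j * h ∈ Icc A B := by
    intro j hj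
    constructor
    · nlinarith [Nat.cast_nonneg (α := ℝ) j]
    · have : (j : ℝ) * h ≤ (K : ℝ) * h := by
        have : (j : ℝ) ≤ K := by exact_mod_cast hj.le
        nlinarith
      nlinarith
  have hsum : ∑ k' : Fin K, (slope g A h (k' + 1) - slope g A h k') * relu (t - (A + k' * h))
      = slope g A h (k + 1) * (t - (A + k * h)) + (g (A + k * h) - g A) := by
    rw [← abel_identity g A h t hh.ne' k]
    rw [Fin.sum_univ_eq_sum_range
      (fun j => (slope g A h (j + 1) - slope g A h j) * relu (t - (A + j * h)))]
    rw [← Finset.sum_range_add_sum_Ico _ (Nat.succ_le_of_lt hkK)]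
    have hzero : ∑ j ∈ Finset.Ico (k+1) K,
        (slope g A h (j + 1) - slope g A h j) * relu (t - (A + j * h)) = 0 := by
      apply Finset.sum_eq_zero
      intro j hj
      obtain ⟨hj1, hj2⟩ := Finset.mem_Ico.mp hj
      have : t - (A + j * h) ≤ 0 := by
        have : ((k:ℝ) + 1) ≤ (j : ℝ) := by exact_mod_cast hj1
        nlinarith
      rw [relu_of_nonpos this, mul_zero]
    rw [hzero, add_zero]
    apply Finset.sum_congr rfl
    intro j hj
    have hjk : (j : ℝ) ≤ k := by exact_mod_cast Nat.lt_succ_iff.mp (Finset.mem_range.mp hj)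
    have : 0 ≤ t - (A + j * h) := by nlinarith
    rw [relu_of_nonneg this]
  rw [hsum]
  -- error bound
  have hkB : A + k * h ∈ Icc A B := hmem k hkK
  have hk1B : A + (k+1) * h ∈ Icc A B := by
    constructor
    · nlinarith [Nat.cast_nonneg (α := ℝ) k]
    · have : ((k:ℝ) + 1) ≤ K := by exact_mod_cast Nat.succ_le_of_lt hkK
      nlinarith
  have e1 : |g t - g (A + k * h)| < ε / 2 := by
    have := hucd t ⟨ht1, ht2⟩ (A + k * h) hkB (by
      rw [Real.dist_eq]
      rw [abs_of_nonneg (by linarith)]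
      linarith)
    rwa [Real.dist_eq] at this
  have e2 : |slope g A h (k + 1) * (t - (A + k * h))| ≤ ε / 2 := by
    have hd : |g (A + (k+1) * h) - g (A + k * h)| < ε / 2 := by
      have := hucd (A + (k+1) * h) hk1B (A + k * h) hkB (by
        rw [Real.dist_eq]
        have : A + (k+1) * h - (A + k * h) = h := by push_cast; ring
        rw [this, abs_of_nonneg hh.le]
        exact hhδ)
      rwa [Real.dist_eq] at this
    have hsl : slope g A h (k+1) = (g (A + (k+1) * h) - g (A + k * h)) / h := by
      simp [slope]
    rw [abs_mul, hsl, abs_div, abs_of_nonneg hh.le]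
    have habs : |t - (A + k * h)| ≤ h := by
      rw [abs_of_nonneg (by linarith)]
      push_cast at hk2 ⊢
      linarith
    calc |g (A + (k+1) * h) - g (A + k * h)| / h * |t - (A + k * h)|
        ≤ |g (A + (k+1) * h) - g (A + k * h)| / h * h := by
          apply mul_le_mul_of_nonneg_left habs (by positivity)
      _ = |g (A + (k+1) * h) - g (A + k * h)| := by field_simp
      _ ≤ ε / 2 := hd.le
  calc |g t - (g A + (slope g A h (k + 1) * (t - (A + k * h)) + (g (A + k * h) - g A)))|
      = |(g t - g (A + k * h)) - slope g A h (k + 1) * (t - (A + k * h))| := by ring_nf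
    _ ≤ |g t - g (A + k * h)| + |slope g A h (k + 1) * (t - (A + k * h))| := abs_sub _ _
    _ ≤ ε := by linarith


variable {n : ℕ}

def dot (a x : Fin n → ℝ) : ℝ := ∑ j, a j * x j

lemma dot_single (j : Fin n) (x : Fin n → ℝ) : dot (Pi.single j 1) x = x j := by
  unfold dot
  rw [Finset.sum_eq_single j] <;> simp +contextual [Pi.single_apply]

lemma dot_add (a b x : Fin n → ℝ) : dot (a + b) x = dot a x + dot b x := by
  unfold dot; rw [← Finset.sum_add_distrib]; congr 1; funext j; simp; ring

lemma dot_zero (x : Fin n → ℝ) : dot 0 x = 0 := by simp [dot]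

lemma dot_neg (a x : Fin n → ℝ) : dot (-a) x = -dot a x := by
  simp [dot, Finset.sum_neg_distrib]

lemma continuous_dot (a : Fin n → ℝ) : Continuous (fun x : Fin n → ℝ => dot a x) := by
  unfold dot; fun_prop

/-- exactly representable by one hidden ReLU layer plus constant -/
def Rep (n : ℕ) (φ : (Fin n → ℝ) → ℝ) : Prop :=
  ∃ (ι : Type) (_ : Fintype ι) (r : ι → Fin n → ℝ) (β : ι → ℝ) (c : ι → ℝ) (γ : ℝ),
    ∀ x, φ x = γ + ∑ k, c k * relu (dot (r k) x + β k)

/-- approximable on Cs by representable functions -/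
def Cl (n : ℕ) (Cs : Set (Fin n → ℝ)) (φ : (Fin n → ℝ) → ℝ) : Prop :=
  ∀ ε : ℝ, 0 < ε → ∃ ψ, Rep n ψ ∧ ∀ x ∈ Cs, |φ x - ψ x| ≤ ε

lemma Rep.const (γ : ℝ) : Rep n (fun _ => γ) :=
  ⟨PEmpty, inferInstance, fun k => k.elim, fun k => k.elim, fun k => k.elim, γ, by simp⟩

lemma Rep.add {φ₁ φ₂} (h1 : Rep n φ₁) (h2 : Rep n φ₂) : Rep n (fun x => φ₁ x + φ₂ x) := by
  obtain ⟨ι₁, f1, r1, β1, c1, γ1, e1⟩ := h1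
  obtain ⟨ι₂, f2, r2, β2, c2, γ2, e2⟩ := h2
  refine ⟨ι₁ ⊕ ι₂, inferInstance, Sum.elim r1 r2, Sum.elim β1 β2, Sum.elim c1 c2, γ1 + γ2, ?_⟩
  intro x
  simp only []
  rw [e1 x, e2 x, Fintype.sum_sum_type]
  simp only [Sum.elim_inl, Sum.elim_inr]
  ring

lemma Rep.smul {φ} (c : ℝ) (h : Rep n φ) : Rep n (fun x => c * φ x) := by
  obtain ⟨ι, fi, r, β, cc, γ, e⟩ := h
  refine ⟨ι, fi, r, β, fun k => c * cc k, c * γ, fun x => ?_⟩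
  simp only []
  rw [e x, mul_add, Finset.mul_sum]
  congr 1
  apply Finset.sum_congr rfl
  intros; ring

lemma Cl.ofRep {Cs : Set (Fin n → ℝ)} {φ} (h : Rep n φ) : Cl n Cs φ :=
  fun ε hε => ⟨φ, h, fun x _ => by simp [le_of_lt hε]⟩

lemma Cl.add {Cs : Set (Fin n → ℝ)} {φ₁ φ₂} (h1 : Cl n Cs φ₁) (h2 : Cl n Cs φ₂) :
    Cl n Cs (fun x => φ₁ x + φ₂ x) := by
  intro ε hε
  obtain ⟨ψ₁, hr1, ha1⟩ := h1 (ε/2) (by positivity)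
  obtain ⟨ψ₂, hr2, ha2⟩ := h2 (ε/2) (by positivity)
  refine ⟨fun x => ψ₁ x + ψ₂ x, hr1.add hr2, fun x hx => ?_⟩
  have := ha1 x hx; have := ha2 x hx
  calc |φ₁ x + φ₂ x - (ψ₁ x + ψ₂ x)| = |(φ₁ x - ψ₁ x) + (φ₂ x - ψ₂ x)| := by ring_nf
    _ ≤ |φ₁ x - ψ₁ x| + |φ₂ x - ψ₂ x| := abs_add_le _ _
    _ ≤ ε := by linarith

lemma Cl.smul {Cs : Set (Fin n → ℝ)} {φ} (c : ℝ) (h : Cl n Cs φ) :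
    Cl n Cs (fun x => c * φ x) := by
  intro ε hε
  obtain ⟨ψ, hr, ha⟩ := h (ε / (|c| + 1)) (by positivity)
  refine ⟨fun x => c * ψ x, hr.smul c, fun x hx => ?_⟩
  have h1 := ha x hx
  calc |c * φ x - c * ψ x| = |c| * |φ x - ψ x| := by rw [← abs_mul]; ring_nf
    _ ≤ |c| * (ε / (|c| + 1)) := by
        apply mul_le_mul_of_nonneg_left h1 (abs_nonneg c)
    _ ≤ ε := by
        rw [div_eq_inv_mul, ← mul_assoc]
        have hc : 0 ≤ |c| := abs_nonneg c
        have : |c| * (|c| + 1)⁻¹ ≤ 1 := by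
          rw [mul_inv_le_iff₀ (by positivity)]; linarith
        nlinarith
lemma Cl.ofApprox {Cs : Set (Fin n → ℝ)} {φ}
    (h : ∀ ε : ℝ, 0 < ε → ∃ φ', Cl n Cs φ' ∧ ∀ x ∈ Cs, |φ x - φ' x| ≤ ε) : Cl n Cs φ := by
  intro ε hε
  obtain ⟨φ', hcl, ha⟩ := h (ε/2) (by positivity)
  obtain ⟨ψ, hr, ha2⟩ := hcl (ε/2) (by positivity)
  refine ⟨ψ, hr, fun x hx => ?_⟩
  have := ha x hx; have := ha2 x hx
  calc |φ x - ψ x| = |(φ x - φ' x) + (φ' x - ψ x)| := by ring_nf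
    _ ≤ |φ x - φ' x| + |φ' x - ψ x| := abs_add_le _ _
    _ ≤ ε := by linarith

lemma Cl.finsum {Cs : Set (Fin n → ℝ)} {ι : Type*} (s : Finset ι) (φ : ι → (Fin n → ℝ) → ℝ)
    (h : ∀ j ∈ s, Cl n Cs (φ j)) : Cl n Cs (fun x => ∑ j ∈ s, φ j x) := by
  classical
  induction s using Finset.induction_on with
  | empty => simpa using Cl.ofRep (Rep.const 0)
  | @insert a s' hx ih =>
      simp only [Finset.sum_insert hx]
      exact Cl.add (h a (Finset.mem_insert_self a s'))
        (ih fun j hj => h j (Finset.mem_insert_of_mem hj))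

/-- ridge functions are approximable when `dot a` is bounded on Cs -/
lemma Cl.ridge {Cs : Set (Fin n → ℝ)} (g : ℝ → ℝ) (hg : Continuous g) (a : Fin n → ℝ)
    {R : ℝ} (hR : ∀ x ∈ Cs, |dot a x| ≤ R) : Cl n Cs (fun x => g (dot a x)) := by
  intro ε hε
  rcases Cs.eq_empty_or_nonempty with hCe | ⟨x₀, hx₀⟩
  · exact ⟨fun _ => 0, Rep.const 0, by simp [hCe]⟩
  have hR0 : 0 ≤ R := le_trans (abs_nonneg _) (hR x₀ hx₀)
  obtain ⟨K, c, t0, α, hK⟩ := pwl_approx g hg (show -(R+1) < R+1 by linarith) hε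
  refine ⟨fun x => α + ∑ k, c k * relu (dot a x - t0 k),
    ⟨Fin K, inferInstance, fun _ => a, fun k => -t0 k, c, α, by
      intro x; simp [sub_eq_add_neg]⟩, fun x hx => ?_⟩
  have hb := abs_le.mp (hR x hx)
  exact hK (dot a x) ⟨by linarith, by linarith⟩


/-- Every continuous function is approximable on a compact set by one-hidden-layer ReLU nets. -/
lemma Cl.of_continuous {Cs : Set (Fin n → ℝ)} (hC : IsCompact Cs)
    (F : (Fin n → ℝ) → ℝ) (hF : Continuous F) : Cl n Cs F := by
  -- bound for ridge arguments
  have hdotB : ∀ a : Fin n → ℝ, ∃ R, ∀ x ∈ Cs, |dot a x| ≤ R := by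
    intro a
    rcases (hC.image (continuous_dot a)).exists_bound_of_continuousOn
      continuousOn_id with ⟨R, hR⟩
    exact ⟨R, fun x hx => by simpa using hR _ (mem_image_of_mem _ hx)⟩
  -- exp-ridges are approximable
  have hexp : ∀ a : Fin n → ℝ, Cl n Cs (fun x => Real.exp (dot a x)) := by
    intro a
    obtain ⟨R, hR⟩ := hdotB a
    exact Cl.ridge Real.exp Real.continuous_exp a hR
  apply Cl.ofApprox
  intro ε hε
  -- Stone–Weierstrass on the compact space ↥Cs
  haveI : CompactSpace ↥Cs := isCompact_iff_compactSpace.mp hC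
  -- the submonoid of exponentials
  set expC : (Fin n → ℝ) → C(↥Cs, ℝ) :=
    fun a => ⟨fun x => Real.exp (dot a x.1), by
      exact Real.continuous_exp.comp ((continuous_dot a).comp continuous_subtype_val)⟩
    with hexpC
  set S : Set C(↥Cs, ℝ) := Set.range expC with hS
  have hmul : ∀ a b, expC a * expC b = expC (a + b) := by
    intro a b
    ext x
    simp [hexpC, dot_add, Real.exp_add]
  have hone : expC 0 = 1 := by
    ext x; simp [hexpC, dot_zero]
  set SM : Submonoid C(↥Cs, ℝ) :=
    { carrier := S
      one_mem' := ⟨0, hone⟩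
      mul_mem' := by
        rintro _ _ ⟨a, rfl⟩ ⟨b, rfl⟩
        exact ⟨a + b, (hmul a b).symm⟩ } with hSM
  set E : Subalgebra ℝ C(↥Cs, ℝ) := Algebra.adjoin ℝ S with hE
  have hsep : E.SeparatesPoints := by
    rintro x y hxy
    have hneq : x.1 ≠ y.1 := fun h => hxy (Subtype.ext h)
    obtain ⟨j, hj⟩ := Function.ne_iff.mp hneq
    refine ⟨expC (Pi.single j 1), ⟨expC (Pi.single j 1),
      Algebra.subset_adjoin ⟨Pi.single j 1, rfl⟩, rfl⟩, ?_⟩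
    simp only [hexpC, ContinuousMap.coe_mk]
    rw [dot_single, dot_single]
    exact fun h => hj (Real.exp_injective h)
  obtain ⟨g, hg⟩ := ContinuousMap.exists_mem_subalgebra_near_continuous_of_separatesPoints
    E hsep (fun x : ↥Cs => F x.1) (hF.comp continuous_subtype_val) ε hε
  -- g is a finite linear combination of exponentials
  have hgspan : (g : C(↥Cs, ℝ)) ∈ Submodule.span ℝ S := by
    have h1 : Subalgebra.toSubmodule E = Submodule.span ℝ (Submonoid.closure S : Set _) :=
      Algebra.adjoin_eq_span ℝ S
    have h2 : Submonoid.closure S = SM := Submonoid.closure_eq SM ▸ rfl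
    have h3 : (g : C(↥Cs, ℝ)) ∈ Subalgebra.toSubmodule E := g.2
    rw [h1, h2] at h3
    exact h3
  rw [Submodule.mem_span_set'] at hgspan
  obtain ⟨N, coef, vv, hvv⟩ := hgspan
  choose aa haa using fun j => (vv j).2
  refine ⟨fun x => ∑ j : Fin N, coef j * Real.exp (dot (aa j) x), ?_, ?_⟩
  · exact Cl.finsum Finset.univ _ (fun j _ => Cl.smul (coef j) (hexp (aa j)))
  · intro x hx
    have hgx : (g : C(↥Cs, ℝ)) ⟨x, hx⟩ = ∑ j : Fin N, coef j * Real.exp (dot (aa j) x) := by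
      rw [← hvv]
      have : ((∑ i : Fin N, coef i • (vv i : C(↥Cs, ℝ))) : C(↥Cs, ℝ)) ⟨x, hx⟩
          = ∑ i : Fin N, coef i • ((vv i : C(↥Cs, ℝ)) ⟨x, hx⟩) := by
        rw [ContinuousMap.coe_sum]
        simp [Finset.sum_apply]
      rw [this]
      apply Finset.sum_congr rfl
      intro j _
      rw [← haa j]
      simp [hexpC]
    have := hg ⟨x, hx⟩
    rw [hgx] at this
    have h2 : ‖(∑ j : Fin N, coef j * Real.exp (dot (aa j) x)) - F x‖ < ε := this
    rw [Real.norm_eq_abs] at h2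
    simp only []
    rw [abs_sub_comm] at h2
    exact h2.le

section Generic

variable {Z : Type*} [NormedAddCommGroup Z] [NormedSpace ℝ Z]
  [FiniteDimensional ℝ Z] [SecondCountableTopology Z]
  {ι₂ : Type} [Fintype ι₂] [DecidableEq ι₂] {m : ℕ}

/-- Solve-for-column-j parametrization of collisions. -/
def solveMap (F : Z → Fin m → ℝ) (G : Z → ι₂ → ℝ) (j : ι₂)
    (zD : Z × (Fin m → {i : ι₂ // i ≠ j} → ℝ)) : Fin m → ι₂ → ℝ :=
  fun i k =>
    if h : k = j then
      (G zD.1 j)⁻¹ * (-(F zD.1 i) - ∑ k' : {i : ι₂ // i ≠ j}, zD.2 i k' * G zD.1 k'.1)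
    else zD.2 i ⟨k, h⟩

lemma badSet_dimH (F : Z → Fin m → ℝ) (G : Z → ι₂ → ℝ)
    (hF : ContDiff ℝ 1 F) (hG : ContDiff ℝ 1 G) :
    dimH {Δ : Fin m → ι₂ → ℝ | ∃ z, G z ≠ 0 ∧ ∀ i, F z i + ∑ k, Δ i k * G z k = 0}
      ≤ ((finrank ℝ Z + m * (Fintype.card ι₂ - 1) : ℕ) : ℝ≥0∞) := by
  classical
  set U : ∀ _j : ι₂, Set (Z × (Fin m → {i : ι₂ // i ≠ _j} → ℝ)) :=
    fun _j => {zD | G zD.1 _j ≠ 0} with hU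
  -- inclusion into the union of images
  have hincl : {Δ : Fin m → ι₂ → ℝ | ∃ z, G z ≠ 0 ∧ ∀ i, F z i + ∑ k, Δ i k * G z k = 0}
      ⊆ ⋃ j : ι₂, solveMap F G j '' U j := by
    rintro Δ ⟨z, hGz, heq⟩
    obtain ⟨j, hj⟩ := Function.ne_iff.mp hGz
    simp only [Pi.zero_apply] at hj
    refine mem_iUnion.mpr ⟨j, ⟨(z, fun i k' => Δ i k'.1), hj, ?_⟩⟩
    funext i k
    unfold solveMap
    by_cases h : k = j
    · subst h
      rw [dif_pos rfl]
      have hsplit : ∑ k', Δ i k' * G z k'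
          = Δ i k * G z k + ∑ k' : {i : ι₂ // i ≠ k}, Δ i k'.1 * G z k'.1 := by
        rw [Fintype.sum_eq_add_sum_compl k (fun k' => Δ i k' * G z k')]
        congr 1
        exact Finset.sum_subtype ({k}ᶜ : Finset ι₂)
          (fun k' => by simp) (fun k' => Δ i k' * G z k')
      have h0 := heq i
      rw [hsplit] at h0
      simp only []
      rw [inv_mul_eq_iff_eq_mul₀ hj]
      linear_combination -h0
    · rw [dif_neg h]
  refine le_trans (dimH_mono hincl) ?_
  rw [dimH_iUnion]
  apply iSup_le
  intro j
  -- the image of a locally Lipschitz map from a space of dimension finrank Z + m*(card-1)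
  have hsmooth : ∀ zD ∈ U j, ContDiffAt ℝ 1 (solveMap F G j) zD := by
    intro zD hzD
    have hGk : ∀ k : ι₂, ContDiff ℝ 1
        (fun w : Z × (Fin m → {i : ι₂ // i ≠ j} → ℝ) => G w.1 k) :=
      fun k => (contDiff_pi.mp (hG.comp contDiff_fst)) k
    have hFi : ∀ i : Fin m, ContDiff ℝ 1
        (fun w : Z × (Fin m → {i : ι₂ // i ≠ j} → ℝ) => F w.1 i) :=
      fun i => (contDiff_pi.mp (hF.comp contDiff_fst)) i
    have hD : ∀ (i : Fin m) (k' : {i : ι₂ // i ≠ j}), ContDiff ℝ 1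
        (fun w : Z × (Fin m → {i : ι₂ // i ≠ j} → ℝ) => w.2 i k') :=
      fun i k' => (contDiff_pi.mp ((contDiff_pi.mp contDiff_snd) i)) k'
    apply contDiffAt_pi.mpr
    intro i
    apply contDiffAt_pi.mpr
    intro k
    by_cases h : k = j
    · subst h
      simp only [solveMap, dif_pos]
      apply ContDiffAt.mul
      · exact ((hGk k).contDiffAt).inv hzD
      · apply ContDiffAt.sub
        · exact ((hFi i).neg).contDiffAt
        · exact (ContDiff.sum fun k' _ => (hD i k').mul (hGk k'.1)).contDiffAt
    · simp only [solveMap, dif_neg h]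
      exact (hD i ⟨k, h⟩).contDiffAt
  have himg : dimH (solveMap F G j '' U j) ≤ dimH (U j) := by
    apply dimH_image_le_of_locally_lipschitzOn
    intro zD hzD
    obtain ⟨K, t, ht, hl⟩ := (hsmooth zD hzD).exists_lipschitzOnWith
    exact ⟨K, t, mem_nhdsWithin_of_mem_nhds ht, hl⟩
  refine himg.trans ?_
  refine le_trans (dimH_mono (subset_univ _)) ?_
  rw [Real.dimH_univ_eq_finrank]
  norm_cast
  rw [Module.finrank_prod, Module.finrank_pi_fintype]
  simp [Module.finrank_fintype_fun_eq_card, Fintype.card_subtype_compl]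

/-- Existence of an arbitrarily small good perturbation avoiding finitely many bad sets. -/
lemma exists_good_delta (hm : finrank ℝ Z < m) (hc : 1 ≤ Fintype.card ι₂)
    {P : Type} [Fintype P] (F : P → Z → Fin m → ℝ) (G : P → Z → ι₂ → ℝ)
    (hF : ∀ p, ContDiff ℝ 1 (F p)) (hG : ∀ p, ContDiff ℝ 1 (G p))
    {δ : ℝ} (hδ : 0 < δ) :
    ∃ Δ : Fin m → ι₂ → ℝ, (∀ i k, |Δ i k| < δ) ∧
      ∀ p z, G p z ≠ 0 → ¬ (∀ i, F p z i + ∑ k, Δ i k * G p z k = 0) := by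
  classical
  set Bad : Set (Fin m → ι₂ → ℝ) :=
    ⋃ p : P, {Δ | ∃ z, G p z ≠ 0 ∧ ∀ i, F p z i + ∑ k, Δ i k * G p z k = 0} with hBad
  have hdim : dimH Bad < finrank ℝ (Fin m → ι₂ → ℝ) := by
    have hfr : finrank ℝ (Fin m → ι₂ → ℝ) = m * Fintype.card ι₂ := by
      rw [Module.finrank_pi_fintype]
      simp [Module.finrank_fintype_fun_eq_card]
    rw [hBad, dimH_iUnion, hfr]
    apply lt_of_le_of_lt (iSup_le fun p => badSet_dimH (F p) (G p) (hF p) (hG p))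
    have : finrank ℝ Z + m * (Fintype.card ι₂ - 1) < m * Fintype.card ι₂ := by
      have h1 : Fintype.card ι₂ = (Fintype.card ι₂ - 1) + 1 := (Nat.succ_pred_eq_of_pos hc).symm
      calc finrank ℝ Z + m * (Fintype.card ι₂ - 1) < m + m * (Fintype.card ι₂ - 1) := by
            omega
        _ = m * ((Fintype.card ι₂ - 1) + 1) := by rw [Nat.mul_succ]; omega
        _ = m * Fintype.card ι₂ := by rw [← h1]
    exact_mod_cast this
  have hdense : Dense Badᶜ := dense_compl_of_dimH_lt_finrank hdim
  obtain ⟨Δ, hΔ⟩ := Metric.dense_iff.mp hdense 0 δ hδ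
  refine ⟨Δ, ?_, ?_⟩
  · intro i k
    have h1 : dist Δ 0 < δ := Metric.mem_ball.mp hΔ.1
    rw [dist_zero_right] at h1
    calc |Δ i k| = ‖Δ i k‖ := rfl
      _ ≤ ‖Δ i‖ := norm_le_pi_norm (Δ i) k
      _ ≤ ‖Δ‖ := norm_le_pi_norm Δ i
      _ < δ := h1
  · intro p z hGz hcol
    exact hΔ.2 (mem_iUnion.mpr ⟨p, z, hGz, hcol⟩)

end Generic

lemma joint_approx {m : ℕ} {Cs : Set (Fin n → ℝ)} (hC : IsCompact Cs)
    (f : (Fin n → ℝ) → (Fin m → ℝ)) (hf : Continuous f) {ε' : ℝ} (hε' : 0 < ε') :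
    ∃ (ι : Type) (_ : Fintype ι) (r : ι → Fin n → ℝ) (β : ι → ℝ) (Wc : Fin m → ι → ℝ),
      ∀ x ∈ Cs, ∀ i, |f x i - ∑ k, Wc i k * relu (dot (r k) x + β k)| ≤ ε' := by
  classical
  have hcl : ∀ i, Cl n Cs (fun x => f x i) :=
    fun i => Cl.of_continuous hC _ ((continuous_apply i).comp hf)
  choose ψ hψrep hψapx using fun i => hcl i ε' hε'
  choose ι ii r β c γ hrep using hψrep
  haveI : ∀ i, Fintype (ι i) := ii
  refine ⟨(Σ i : Fin m, ι i) ⊕ Unit, inferInstance,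
    Sum.elim (fun u => r u.1 u.2) (fun _ => 0),
    Sum.elim (fun u => β u.1 u.2) (fun _ => 1),
    fun i' => Sum.elim (fun u => if u.1 = i' then c u.1 u.2 else 0) (fun _ => γ i'), ?_⟩
  intro x hx i'
  have hval : ∑ u : (Σ i : Fin m, ι i) ⊕ Unit,
      (Sum.elim (fun u : Σ i : Fin m, ι i => if u.1 = i' then c u.1 u.2 else 0)
        (fun _ : Unit => γ i')) u *
        relu (dot (Sum.elim (fun u : Σ i : Fin m, ι i => r u.1 u.2) (fun _ : Unit => 0) u) x
          + Sum.elim (fun u : Σ i : Fin m, ι i => β u.1 u.2) (fun _ : Unit => 1) u)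
      = ψ i' x := by
    rw [Fintype.sum_sum_type]
    have hconst : ∑ u : Unit, (γ i') * relu (dot 0 x + 1) = γ i' := by
      rw [dot_zero, zero_add, relu_of_nonneg zero_le_one]
      simp
    simp only [Sum.elim_inl, Sum.elim_inr]
    rw [hconst]
    have hsig : ∑ u : Σ i : Fin m, ι i,
        (if u.1 = i' then c u.1 u.2 else 0) * relu (dot (r u.1 u.2) x + β u.1 u.2)
        = ∑ k : ι i', c i' k * relu (dot (r i' k) x + β i' k) := by
      rw [← Finset.univ_sigma_univ, Finset.sum_sigma]
      rw [Finset.sum_eq_single i']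
      · apply Finset.sum_congr rfl; intro k _; rw [if_pos rfl]
      · intro b _ hb
        apply Finset.sum_eq_zero
        intro k _
        rw [if_neg hb, zero_mul]
      · intro h; exact absurd (Finset.mem_univ i') h
    rw [hsig, hrep i' x, add_comm]
    congr!
  rw [hval]
  exact hψapx i' x hx

/-- index type for the injectivity units -/
def kappa (n : ℕ) : Type := (Fin n ⊕ Fin n) ⊕ Unit

instance : Fintype (kappa n) := by unfold kappa; infer_instance
instance : DecidableEq (kappa n) := by unfold kappa; infer_instance

lemma card_kappa : Fintype.card (kappa n) = 2 * n + 1 := by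
  simp [kappa]; omega

def runit : kappa n → Fin n → ℝ :=
  Sum.elim (Sum.elim (fun i => Pi.single i 1) (fun i => -(Pi.single i 1))) (fun _ => 0)

def bunit : kappa n → ℝ := Sum.elim (fun _ => 0) (fun _ => 1)

def vmap (x : Fin n → ℝ) (k : kappa n) : ℝ := relu (dot (runit k) x + bunit k)

lemma vmap_inl_inl (x : Fin n → ℝ) (i : Fin n) :
    vmap x (Sum.inl (Sum.inl i)) = relu (x i) := by
  simp [vmap, runit, bunit, dot_single]

lemma vmap_inl_inr (x : Fin n → ℝ) (i : Fin n) :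
    vmap x (Sum.inl (Sum.inr i)) = relu (-(x i)) := by
  simp [vmap, runit, bunit, dot_neg, dot_single]

lemma vmap_inr (x : Fin n → ℝ) (u : Unit) : vmap x (Sum.inr u) = 1 := by
  simp [vmap, runit, bunit, dot_zero]
  exact relu_of_nonneg zero_le_one

lemma vmap_inj {x y : Fin n → ℝ} (h : ∀ k, vmap x k = vmap y k) : x = y := by
  funext i
  have h1 := h (Sum.inl (Sum.inl i)); rw [vmap_inl_inl, vmap_inl_inl] at h1
  have h2 := h (Sum.inl (Sum.inr i)); rw [vmap_inl_inr, vmap_inl_inr] at h2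
  have e1 := relu_sub_relu_neg (x i)
  have e2 := relu_sub_relu_neg (y i)
  linarith

lemma vmap_bound {x : Fin n → ℝ} {R : ℝ} (hR : 0 ≤ R) (hx : ‖x‖ ≤ R) (k : kappa n) :
    |vmap x k| ≤ R + 1 := by
  have hxi : ∀ i, |x i| ≤ R := fun i => le_trans (norm_le_pi_norm x i) hx
  rcases k with (i | i) | u
  · rw [vmap_inl_inl]
    exact le_trans (abs_relu_le _) (by linarith [hxi i])
  · rw [vmap_inl_inr]
    refine le_trans (abs_relu_le _) ?_
    rw [abs_neg]
    linarith [hxi i]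
  · rw [vmap_inr]
    rw [abs_one]
    linarith

/-- affine piece of the hidden-layer part, for a fixed activation sign pattern pair -/
def Fpiece {m : ℕ} {ι : Type} [Fintype ι] (r : ι → Fin n → ℝ) (β : ι → ℝ)
    (Wc : Fin m → ι → ℝ) (p : (ι → Bool) × (ι → Bool))
    (z : (Fin n → ℝ) × (Fin n → ℝ)) (i : Fin m) : ℝ :=
  (∑ k, if p.1 k then Wc i k * (dot (r k) z.1 + β k) else 0)
    - ∑ k, if p.2 k then Wc i k * (dot (r k) z.2 + β k) else 0

def Gpiece (q : (kappa n → Bool) × (kappa n → Bool))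
    (z : (Fin n → ℝ) × (Fin n → ℝ)) (k : kappa n) : ℝ :=
  (if q.1 k then dot (runit k) z.1 + bunit k else 0)
    - if q.2 k then dot (runit k) z.2 + bunit k else 0

lemma contDiff_dot_fst (a : Fin n → ℝ) (c : ℝ) :
    ContDiff ℝ 1 (fun z : (Fin n → ℝ) × (Fin n → ℝ) => dot a z.1 + c) := by
  apply ContDiff.add ?_ contDiff_const
  unfold dot
  apply ContDiff.sum
  intro j _
  exact contDiff_const.mul ((contDiff_pi.mp contDiff_fst) j)

lemma contDiff_dot_snd (a : Fin n → ℝ) (c : ℝ) :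
    ContDiff ℝ 1 (fun z : (Fin n → ℝ) × (Fin n → ℝ) => dot a z.2 + c) := by
  apply ContDiff.add ?_ contDiff_const
  unfold dot
  apply ContDiff.sum
  intro j _
  exact contDiff_const.mul ((contDiff_pi.mp contDiff_snd) j)

lemma contDiff_Fpiece {m : ℕ} {ι : Type} [Fintype ι] (r : ι → Fin n → ℝ) (β : ι → ℝ)
    (Wc : Fin m → ι → ℝ) (p : (ι → Bool) × (ι → Bool)) :
    ContDiff ℝ 1 (fun z => Fpiece r β Wc p z) := by
  apply contDiff_pi.mpr
  intro i
  unfold Fpiece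
  apply ContDiff.sub
  · apply ContDiff.sum
    intro k _
    by_cases hb : p.1 k = true
    · simp only [if_pos hb]
      exact contDiff_const.mul (contDiff_dot_fst (r k) (β k))
    · simp only [if_neg hb]
      exact contDiff_const
  · apply ContDiff.sum
    intro k _
    by_cases hb : p.2 k = true
    · simp only [if_pos hb]
      exact contDiff_const.mul (contDiff_dot_snd (r k) (β k))
    · simp only [if_neg hb]
      exact contDiff_const

lemma contDiff_Gpiece (q : (kappa n → Bool) × (kappa n → Bool)) :
    ContDiff ℝ 1 (fun z => Gpiece (n := n) q z) := by
  apply contDiff_pi.mpr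
  intro k
  unfold Gpiece
  apply ContDiff.sub
  · by_cases hb : q.1 k = true
    · simp only [if_pos hb]
      exact contDiff_dot_fst (runit k) (bunit k)
    · simp only [if_neg hb]
      exact contDiff_const
  · by_cases hb : q.2 k = true
    · simp only [if_pos hb]
      exact contDiff_dot_snd (runit k) (bunit k)
    · simp only [if_neg hb]
      exact contDiff_const

lemma mul_relu_ite (c t : ℝ) : c * relu t = if decide (0 ≤ t) then c * t else 0 := by
  rcases le_or_gt 0 t with h | h
  · rw [relu_of_nonneg h, if_pos (by simpa using h)]
  · rw [relu_of_nonpos h.le, mul_zero, if_neg (by simpa using not_le.mpr h)]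

lemma relu_ite (t : ℝ) : relu t = if decide (0 ≤ t) then t else 0 := by
  have := mul_relu_ite 1 t
  simpa using this

/-- evaluation of Fpiece at the sign patterns of given x, y -/
lemma Fpiece_eval {m : ℕ} {ι : Type} [Fintype ι] (r : ι → Fin n → ℝ) (β : ι → ℝ)
    (Wc : Fin m → ι → ℝ) (x y : Fin n → ℝ) (i : Fin m) :
    Fpiece r β Wc (fun k => decide (0 ≤ dot (r k) x + β k),
      fun k => decide (0 ≤ dot (r k) y + β k)) (x, y) i
      = (∑ k, Wc i k * relu (dot (r k) x + β k))
        - ∑ k, Wc i k * relu (dot (r k) y + β k) := by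
  unfold Fpiece
  congr 1
  · apply Finset.sum_congr rfl
    intro k _
    rw [mul_relu_ite]
  · apply Finset.sum_congr rfl
    intro k _
    rw [mul_relu_ite]

lemma Gpiece_eval (x y : Fin n → ℝ) (k : kappa n) :
    Gpiece (fun k => decide (0 ≤ dot (runit k) x + bunit k),
      fun k => decide (0 ≤ dot (runit k) y + bunit k)) (x, y) k
      = vmap x k - vmap y k := by
  unfold Gpiece vmap
  rw [relu_ite, relu_ite]


def dfun (n H : ℕ) : ℕ → ℕ := fun ℓ => if ℓ = 0 then n else H

noncomputable def Wfam (n H : ℕ) (W1 : Matrix (Fin H) (Fin n) ℝ) :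
    ∀ ℓ : ℕ, Matrix (Fin (dfun n H (ℓ + 1))) (Fin (dfun n H ℓ)) ℝ
  | 0 => W1
  | (_ + 1) => (1 : Matrix (Fin H) (Fin H) ℝ)

noncomputable def bfam (n H : ℕ) (b1 : Fin H → ℝ) : ∀ ℓ : ℕ, Fin (dfun n H (ℓ + 1)) → ℝ
  | 0 => b1
  | (_ + 1) => 0

lemma forward_reduce (n H : ℕ) (W1 : Matrix (Fin H) (Fin n) ℝ) (b1 : Fin H → ℝ)
    (L : ℕ) (x : Fin (dfun n H 0) → ℝ) :
    forward (dfun n H) (Wfam n H W1) (bfam n H b1) (L + 1) x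
      = fun j : Fin H => max (W1.mulVec x j + b1 j) 0 := by
  induction L with
  | zero => rfl
  | succ L ih =>
      have step : forward (dfun n H) (Wfam n H W1) (bfam n H b1) (L + 2) x
          = fun j : Fin H =>
              max ((Wfam n H W1 (L + 1)).mulVec
                (forward (dfun n H) (Wfam n H W1) (bfam n H b1) (L + 1) x) j
                + bfam n H b1 (L + 1) j) 0 := rfl
      rw [step]
      have hW : Wfam n H W1 (L + 1) = (1 : Matrix (Fin H) (Fin H) ℝ) := rfl
      have hb : bfam n H b1 (L + 1) = 0 := rfl
      rw [ih]
      funext j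
      rw [hW, hb]
      show max ((1 : Matrix (Fin H) (Fin H) ℝ).mulVec (fun j => max (W1.mulVec x j + b1 j) 0) j + (0 : Fin H → ℝ) j) 0 = max (W1.mulVec x j + b1 j) 0
      rw [Matrix.one_mulVec]
      simp only [Pi.zero_apply, add_zero]
      exact max_eq_left (le_max_right _ _)

lemma enorm_le_of_forall {m : ℕ} (v : Fin m → ℝ) (c : ℝ) (hc : 0 ≤ c)
    (h : ∀ i, |v i| ≤ c) : _root_.enorm v ≤ m * c := by
  have h1 : ∑ i, v i ^ 2 ≤ (m * c) ^ 2 := by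
    calc ∑ i, v i ^ 2 ≤ ∑ _i : Fin m, c ^ 2 := by
          apply Finset.sum_le_sum
          intro i _
          calc v i ^ 2 = |v i| ^ 2 := (sq_abs _).symm
            _ ≤ c ^ 2 := by nlinarith [h i, abs_nonneg (v i)]
      _ = m * c ^ 2 := by simp [Finset.sum_const, nsmul_eq_mul]
      _ ≤ (m * c) ^ 2 := by
          rcases Nat.eq_zero_or_pos m with h0 | h0
          · simp [h0]
          · have : (1 : ℝ) ≤ m := by exact_mod_cast h0
            nlinarith
  calc _root_.enorm v ≤ Real.sqrt ((m * c) ^ 2) := Real.sqrt_le_sqrt h1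
    _ = m * c := Real.sqrt_sq (by positivity)


end IRN
end

/-- **Universal approximation with injective ReLU networks**: for continuous
`f : ℝ^n → ℝ^m` with `m ≥ 2n+1`, any depth `L ≥ 1`, any `ε > 0` and any compact
`C ⊂ ℝ^n`, there is a depth-`L` ReLU network
`N(z) = W_{L+1} ReLU(W_L ⋯ ReLU(W_1 z + b_1) ⋯ + b_L)` that is injective on all of `ℝ^n`
and satisfies `‖f(x) − N(x)‖ ≤ ε` on `C`. -/
theorem injective_relu_network_universal_approximation
    (n m L : ℕ) (hm : 2 * n + 1 ≤ m) (hL : 1 ≤ L)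
    (f : (Fin n → ℝ) → (Fin m → ℝ)) (hf : Continuous f)
    (ε : ℝ) (hε : 0 < ε) (C : Set (Fin n → ℝ)) (hC : IsCompact C) :
    ∃ (d : ℕ → ℕ) (hd : d 0 = n)
      (W : ∀ ℓ : ℕ, Matrix (Fin (d (ℓ + 1))) (Fin (d ℓ)) ℝ)
      (b : ∀ ℓ : ℕ, Fin (d (ℓ + 1)) → ℝ)
      (Wout : Matrix (Fin m) (Fin (d L)) ℝ),
      Function.Injective
        (fun x : Fin n → ℝ => Wout.mulVec (forward d W b L (x ∘ Fin.cast hd))) ∧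
      ∀ x ∈ C,
        _root_.enorm (f x - Wout.mulVec (forward d W b L (x ∘ Fin.cast hd))) ≤ ε := by
  classical
  obtain ⟨L', rfl⟩ : ∃ L', L = L' + 1 := ⟨L - 1, by omega⟩
  letI : DecidableEq (Fin n → ℝ) := Classical.decEq _
  -- a bound on C
  obtain ⟨R, hR0, hRC⟩ : ∃ R : ℝ, 0 ≤ R ∧ ∀ x ∈ C, ‖x‖ ≤ R := by
    obtain ⟨R0, hR0⟩ := hC.isBounded.subset_closedBall 0
    refine ⟨max R0 0, le_max_right _ _, fun x hx => ?_⟩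
    have h1 := hR0 hx
    rw [Metric.mem_closedBall, dist_zero_right] at h1
    exact h1.trans (le_max_left _ _)
  set ε' : ℝ := ε / (2 * (m + 1)) with hε'def
  have hε'pos : 0 < ε' := by positivity
  -- the approximating hidden units
  obtain ⟨ι, ift, r, β, Wc, happrox⟩ := IRN.joint_approx hC f hf hε'pos
  letI : DecidableEq ι := Classical.decEq ι
  -- a good small perturbation Δ of the output weights on the injectivity units
  have hZfr : Module.finrank ℝ ((Fin n → ℝ) × (Fin n → ℝ)) < m := by
    rw [Module.finrank_prod, Module.finrank_fintype_fun_eq_card, Fintype.card_fin]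
    omega
  have hcκ : 1 ≤ Fintype.card (IRN.kappa n) := by rw [IRN.card_kappa]; omega
  set δ₀ : ℝ := ε' / ((2 * n + 1) * (R + 1) + 1) with hδ₀def
  have hδ₀pos : 0 < δ₀ := by positivity
  obtain ⟨Δ, hΔsmall, hΔgood⟩ := IRN.exists_good_delta (ι₂ := IRN.kappa n) hZfr hcκ
    (fun p : ((ι → Bool) × (ι → Bool)) × ((IRN.kappa n → Bool) × (IRN.kappa n → Bool)) =>
      IRN.Fpiece r β Wc p.1)
    (fun p => IRN.Gpiece p.2)
    (fun p => IRN.contDiff_Fpiece r β Wc p.1)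
    (fun p => IRN.contDiff_Gpiece p.2) hδ₀pos
  -- assemble the network
  set H : ℕ := Fintype.card (ι ⊕ IRN.kappa n) with hHdef
  set e : (ι ⊕ IRN.kappa n) ≃ Fin H := Fintype.equivFin (ι ⊕ IRN.kappa n) with hedef
  set rall : (ι ⊕ IRN.kappa n) → Fin n → ℝ := Sum.elim r IRN.runit with hralldef
  set βall : (ι ⊕ IRN.kappa n) → ℝ := Sum.elim β IRN.bunit with hβalldef
  set W1 : Matrix (Fin H) (Fin n) ℝ := Matrix.of (fun j k => rall (e.symm j) k) with hW1def
  set b1 : (Fin H) → ℝ := fun j => βall (e.symm j) with hb1def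
  set Wout : Matrix (Fin m) (Fin H) ℝ :=
    Matrix.of (fun i j => Sum.elim (Wc i) (Δ i) (e.symm j)) with hWoutdef
  -- evaluation of the network
  have hkey : ∀ x : Fin n → ℝ,
      Wout.mulVec (forward (IRN.dfun n H) (IRN.Wfam n H W1) (IRN.bfam n H b1) (L' + 1)
        (x ∘ Fin.cast (rfl : IRN.dfun n H 0 = n)))
      = fun i => (∑ k : ι, Wc i k * IRN.relu (IRN.dot (r k) x + β k))
          + ∑ k : IRN.kappa n, Δ i k * IRN.vmap x k := by
    intro x
    rw [IRN.forward_reduce]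
    funext i
    show ∑ j : Fin H, Wout i j * max (W1.mulVec x j + b1 j) 0 = _
    have hterm : ∀ j : Fin H, Wout i j * max (W1.mulVec x j + b1 j) 0
        = (fun u : ι ⊕ IRN.kappa n => Sum.elim (Wc i) (Δ i) u
            * IRN.relu (IRN.dot (rall u) x + βall u)) (e.symm j) := by
      intro j
      rw [hWoutdef, hb1def]
      simp only [Matrix.of_apply]
      have hmv : W1.mulVec x j = IRN.dot (rall (e.symm j)) x := by
        rw [hW1def]
        simp [Matrix.mulVec, dotProduct, IRN.dot]
      rw [hmv]
      rfl
    calc ∑ j : Fin H, Wout i j * max (W1.mulVec x j + b1 j) 0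
        = ∑ u : ι ⊕ IRN.kappa n, Sum.elim (Wc i) (Δ i) u
            * IRN.relu (IRN.dot (rall u) x + βall u) :=
          Fintype.sum_equiv e.symm _ _ (fun j => hterm j)
      _ = (∑ k : ι, Wc i k * IRN.relu (IRN.dot (r k) x + β k))
          + ∑ k : IRN.kappa n, Δ i k * IRN.vmap x k := by
          rw [Fintype.sum_sum_type]
          simp only [hralldef, hβalldef, Sum.elim_inl, Sum.elim_inr]
          rfl
  refine ⟨IRN.dfun n H, rfl, IRN.Wfam n H W1, IRN.bfam n H b1, Wout, ?_, ?_⟩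
  · -- injectivity
    intro x y hxy
    dsimp only at hxy
    replace hxy := (hkey x).symm.trans (hxy.trans (hkey y))
    by_contra hne
    have hGne : IRN.Gpiece (fun k => decide (0 ≤ IRN.dot (IRN.runit k) x + IRN.bunit k),
        fun k => decide (0 ≤ IRN.dot (IRN.runit k) y + IRN.bunit k)) (x, y) ≠ 0 := by
      intro h0
      apply hne
      apply IRN.vmap_inj
      intro k
      have h1 := congrFun h0 k
      rw [IRN.Gpiece_eval x y k] at h1
      simp only [Pi.zero_apply] at h1
      linarith
    refine hΔgood ((fun k => decide (0 ≤ IRN.dot (r k) x + β k),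
        fun k => decide (0 ≤ IRN.dot (r k) y + β k)),
        (fun k => decide (0 ≤ IRN.dot (IRN.runit k) x + IRN.bunit k),
        fun k => decide (0 ≤ IRN.dot (IRN.runit k) y + IRN.bunit k))) (x, y) hGne ?_
    intro i
    have h1 := congrFun hxy i
    dsimp only at h1 ⊢
    rw [IRN.Fpiece_eval]
    have hsplit : ∑ k, Δ i k * IRN.Gpiece
        (fun k => decide (0 ≤ IRN.dot (IRN.runit k) x + IRN.bunit k),
         fun k => decide (0 ≤ IRN.dot (IRN.runit k) y + IRN.bunit k)) (x, y) k
        = (∑ k, Δ i k * IRN.vmap x k) - ∑ k, Δ i k * IRN.vmap y k := by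
      rw [← Finset.sum_sub_distrib]
      apply Finset.sum_congr rfl
      intro k _
      rw [IRN.Gpiece_eval x y k]
      ring
    rw [hsplit]
    linarith
  · -- approximation
    intro x hx
    refine (congrArg (fun v : Fin m → ℝ => _root_.enorm (f x - v) ≤ ε) (hkey x)).mpr ?_
    have hcoord : ∀ i, |(f x - fun i =>
        (∑ k : ι, Wc i k * IRN.relu (IRN.dot (r k) x + β k))
          + ∑ k : IRN.kappa n, Δ i k * IRN.vmap x k) i| ≤ 2 * ε' := by
      intro i
      rw [Pi.sub_apply]
      have h1 := happrox x hx i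
      have h2 : |∑ k, Δ i k * IRN.vmap x k| ≤ ε' := by
        have hTpos : (0:ℝ) < (2 * n + 1) * (R + 1) + 1 := by positivity
        calc |∑ k, Δ i k * IRN.vmap x k| ≤ ∑ k, |Δ i k * IRN.vmap x k| :=
              Finset.abs_sum_le_sum_abs _ _
          _ ≤ ∑ _k : IRN.kappa n, δ₀ * (R + 1) := by
              apply Finset.sum_le_sum
              intro k _
              rw [abs_mul]
              exact mul_le_mul (hΔsmall i k).le (IRN.vmap_bound hR0 (hRC x hx) k)
                (abs_nonneg _) hδ₀pos.le
          _ = (Fintype.card (IRN.kappa n) : ℝ) * (δ₀ * (R + 1)) := by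
              rw [Finset.sum_const, Finset.card_univ, nsmul_eq_mul]
          _ = ((2 * n + 1 : ℝ) * (R + 1)) * δ₀ := by
              rw [IRN.card_kappa]; push_cast; ring
          _ ≤ ε' := by
              rw [hδ₀def]
              have hfrac : ((2 * n + 1 : ℝ) * (R + 1)) / ((2 * n + 1) * (R + 1) + 1) ≤ 1 := by
                rw [div_le_one hTpos]
                linarith
              calc (2 * n + 1 : ℝ) * (R + 1) * (ε' / ((2 * n + 1) * (R + 1) + 1))
                  = ε' * (((2 * n + 1 : ℝ) * (R + 1)) / ((2 * n + 1) * (R + 1) + 1)) := by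
                    ring
                _ ≤ ε' * 1 := by
                    apply mul_le_mul_of_nonneg_left hfrac hε'pos.le
                _ = ε' := mul_one _
      calc |f x i - ((∑ k : ι, Wc i k * IRN.relu (IRN.dot (r k) x + β k))
            + ∑ k : IRN.kappa n, Δ i k * IRN.vmap x k)|
          ≤ |f x i - ∑ k : ι, Wc i k * IRN.relu (IRN.dot (r k) x + β k)|
            + |∑ k : IRN.kappa n, Δ i k * IRN.vmap x k| := by
            have := abs_sub (f x i - ∑ k : ι, Wc i k * IRN.relu (IRN.dot (r k) x + β k))
              (∑ k : IRN.kappa n, Δ i k * IRN.vmap x k)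
            calc |f x i - ((∑ k : ι, Wc i k * IRN.relu (IRN.dot (r k) x + β k))
                  + ∑ k : IRN.kappa n, Δ i k * IRN.vmap x k)|
                = |(f x i - ∑ k : ι, Wc i k * IRN.relu (IRN.dot (r k) x + β k))
                  - ∑ k : IRN.kappa n, Δ i k * IRN.vmap x k| := by ring_nf
              _ ≤ _ := abs_sub _ _
        _ ≤ 2 * ε' := by linarith
    refine le_trans (IRN.enorm_le_of_forall _ (2 * ε') (by positivity) hcoord) ?_
    have hmp : (0:ℝ) < (m:ℝ) + 1 := by positivity
    have heq : (m:ℝ) * (2 * ε') = ε * ((m:ℝ) / ((m:ℝ) + 1)) := by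
      rw [hε'def]; field_simp
    rw [heq]
    have hle1 : (m:ℝ) / ((m:ℝ) + 1) ≤ 1 := by
      rw [div_le_one hmp]; linarith
    calc ε * ((m:ℝ) / ((m:ℝ) + 1)) ≤ ε * 1 := mul_le_mul_of_nonneg_left hle1 hε.le
      _ = ε := mul_one _
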